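/- arXiv:2411.03115 — 2 statements merged into one kernel-verified Lean document; each statement's English description precedes it below -/
import Mathlib

section
/- Let p be prime, F_q of characteristic p, and f a polynomial in F_q[x,y] supported in {x^i y^j : 0 ≤ i,j ≤ p−1} (so f^{p−1} is supported in degrees ≤ (p−1)² which we truncate appropriately). Suppose f = α + βx + γy + δxy with at least two of α,β,γ,δ nonzero, and let A₀ be the number of nonzero coefficients of f^{p−1}. Then the word c_ℓ = f^{p^ℓ−1} satisfies |supp(c_ℓ)| = A₀^ℓ, where |supp| denotes the number of nonzero coefficients. In particular the weight of c_ℓ grows without bound since A₀ ≥ 2. -/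
/-- Two-variable Laurent polynomial ring `F[x^{±1}, y^{±1}]`. -/
abbrev Laurent2 (F : Type) [Field F] := AddMonoidAlgebra F (Fin 2 →₀ ℤ)

/-- exponent vector of `x` -/
noncomputable def ex : Fin 2 →₀ ℤ := Finsupp.single 0 1
/-- exponent vector of `y` -/
noncomputable def ey : Fin 2 →₀ ℤ := Finsupp.single 1 1


section Aux
variable {F : Type} [Field F]

/-- All exponents of `g` lie in the box `[0,n]²`. -/
def InBox (n : ℤ) (g : Laurent2 F) : Prop :=
  ∀ v ∈ g.coeff.support, ∀ i : Fin 2, 0 ≤ v i ∧ v i ≤ n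

lemma inBox_mul {a b : ℤ} {g h : Laurent2 F} (hg : InBox a g) (hh : InBox b h) :
    InBox (a + b) (g * h) := by
  classical
  intro v hv i
  have hmem := AddMonoidAlgebra.support_coeff_mul_subset g h hv
  rw [Finset.mem_add] at hmem
  obtain ⟨u, hu, w, hw, rfl⟩ := hmem
  have h1 := hg u hu i
  have h2 := hh w hw i
  simp only [Finsupp.add_apply]
  omega

lemma inBox_pow {g : Laurent2 F} (hg : InBox 1 g) (n : ℕ) : InBox (n : ℤ) (g ^ n) := by
  induction n with
  | zero =>
    intro v hv i
    rw [pow_zero] at hv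
    have := AddMonoidAlgebra.support_coeff_one_subset hv
    rw [Finset.mem_zero] at this
    subst this
    simp
  | succ n ih =>
    rw [pow_succ]
    have := inBox_mul ih hg
    simpa using this

lemma frob_expand (p : ℕ) [Fact p.Prime] [CharP F p] (g : Laurent2 F) (m : ℕ) :
    g ^ p ^ m = ∑ v ∈ g.coeff.support, AddMonoidAlgebra.single (p ^ m • v) (g.coeff v ^ p ^ m) := by
  haveI : CharP (Laurent2 F) p := charP_of_injective_algebraMap' F p
  conv_lhs => rw [← AddMonoidAlgebra.sum_coeff_single g]
  rw [Finsupp.sum]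
  rw [sum_pow_char_pow]
  exact Finset.sum_congr rfl fun v _ => AddMonoidAlgebra.single_pow _ _ _

lemma card_step (p : ℕ) [Fact p.Prime] [CharP F p]
    (f : Laurent2 F) (hbox : InBox 1 f) (ℓ : ℕ) :
    (f ^ (p ^ (ℓ + 1) - 1)).coeff.support.card
      = (f ^ (p - 1)).coeff.support.card * (f ^ (p ^ ℓ - 1)).coeff.support.card := by
  classical
  have hp2 : 2 ≤ p := (Fact.out : p.Prime).two_le
  have hq1 : 1 ≤ p ^ ℓ := Nat.one_le_pow _ _ (by omega)
  set c : Laurent2 F := f ^ (p ^ ℓ - 1) with hc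
  set g : Laurent2 F := f ^ (p - 1) with hg
  have harith : p ^ (ℓ + 1) - 1 = (p ^ ℓ - 1) + (p - 1) * p ^ ℓ := by
    have h1 : p ^ (ℓ + 1) = p ^ ℓ * p := pow_succ p ℓ
    have h2 : (p - 1) * p ^ ℓ = p * p ^ ℓ - p ^ ℓ := by rw [Nat.sub_mul, one_mul]
    have h3 : p ^ ℓ ≤ p * p ^ ℓ := Nat.le_mul_of_pos_left _ (by omega)
    have h4 : p ^ ℓ * p = p * p ^ ℓ := Nat.mul_comm _ _
    omega
  have hsplit : f ^ (p ^ (ℓ + 1) - 1) = c * g ^ p ^ ℓ := by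
    rw [hc, hg, ← pow_mul, ← pow_add, harith]
  rw [hsplit, frob_expand p g ℓ, Finset.mul_sum]
  have hterm : ∀ v ∈ g.coeff.support,
      (c * AddMonoidAlgebra.single (p ^ ℓ • v) (g.coeff v ^ p ^ ℓ)).coeff.support
        = c.coeff.support.map (addRightEmbedding (p ^ ℓ • v)) := by
    intro v hv
    refine AddMonoidAlgebra.support_coeff_mul_single c _ (fun y => ?_) _
    constructor
    · intro h
      rcases mul_eq_zero.mp h with h | h
      · exact h
      · exact absurd h (pow_ne_zero _ (Finsupp.mem_support_iff.mp hv))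
    · intro h; rw [h, zero_mul]
  have hcbox : InBox ((p ^ ℓ - 1 : ℕ) : ℤ) c := inBox_pow hbox _
  have hgbox : InBox ((p - 1 : ℕ) : ℤ) g := inBox_pow hbox _
  have hNcast : ((p ^ ℓ - 1 : ℕ) : ℤ) = ((p ^ ℓ : ℕ) : ℤ) - 1 := by omega
  have hNpos : (0 : ℤ) < (p ^ ℓ : ℕ) := by exact_mod_cast hq1
  have hdisj : ∀ u v : Fin 2 →₀ ℤ, u ≠ v →
      Disjoint (c * AddMonoidAlgebra.single (p ^ ℓ • u) (g.coeff u ^ p ^ ℓ)).coeff.support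
               (c * AddMonoidAlgebra.single (p ^ ℓ • v) (g.coeff v ^ p ^ ℓ)).coeff.support := by
    intro u v huv
    by_cases hu : u ∈ g.coeff.support
    · by_cases hv : v ∈ g.coeff.support
      · rw [hterm u hu, hterm v hv, Finset.disjoint_left]
        rintro x hx hx'
        rw [Finset.mem_map] at hx hx'
        obtain ⟨a, ha, rfl⟩ := hx
        obtain ⟨b, hb, hab⟩ := hx'
        apply huv
        ext i
        have h1 := hcbox a ha i
        have h2 := hcbox b hb i
        have key : b i + (p ^ ℓ : ℕ) * v i = a i + (p ^ ℓ : ℕ) * u i := by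
          have := congrArg (fun w => w i) hab
          simpa [addRightEmbedding, Finsupp.add_apply, Finsupp.smul_apply,
            nsmul_eq_mul] using this
        rw [hNcast] at h1 h2
        set N : ℤ := ((p ^ ℓ : ℕ) : ℤ) with hN
        rcases lt_trichotomy (u i) (v i) with h | h | h
        · exfalso
          have h1' : (1 : ℤ) ≤ v i - u i := by omega
          have hmul : N * 1 ≤ N * (v i - u i) :=
            mul_le_mul_of_nonneg_left h1' (le_of_lt hNpos)
          have hms : N * (v i - u i) = N * v i - N * u i := mul_sub _ _ _
          omega
        · exact h
        · exfalso
          have h1' : (1 : ℤ) ≤ u i - v i := by omega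
          have hmul : N * 1 ≤ N * (u i - v i) :=
            mul_le_mul_of_nonneg_left h1' (le_of_lt hNpos)
          have hms : N * (u i - v i) = N * u i - N * v i := mul_sub _ _ _
          omega
      · have : g.coeff v = 0 := of_not_not (hv ∘ Finsupp.mem_support_iff.mpr)
        simp [this, zero_pow (show p ^ ℓ ≠ 0 by positivity)]
    · have : g.coeff u = 0 := of_not_not (hu ∘ Finsupp.mem_support_iff.mpr)
      simp [this, zero_pow (show p ^ ℓ ≠ 0 by positivity)]
  rw [AddMonoidAlgebra.coeff_sum, Finsupp.support_sum_eq_biUnion g.coeff.support hdisj,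
    Finset.card_biUnion fun u _ v _ huv => hdisj u v huv]
  rw [Finset.sum_congr rfl fun v hv => by rw [hterm v hv, Finset.card_map]]
  rw [Finset.sum_const, smul_eq_mul]

end Aux

noncomputable def Tlin : (Fin 2 →₀ ℤ) →+ ℤ where
  toFun v := v 0 + 2 * v 1
  map_zero' := by simp
  map_add' a b := by simp only [Finsupp.add_apply]; ring


section A0
variable {F : Type} [Field F]
open Polynomial

lemma ntd_pow (q : F[X]) (hq : q ≠ 0) (m : ℕ) :
    (q ^ m).natTrailingDegree = m * q.natTrailingDegree := by
  induction m with
  | zero => simp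
  | succ m ih =>
      rw [pow_succ, natTrailingDegree_mul (pow_ne_zero _ hq) hq, ih]
      ring

lemma two_le_card_pow (q : F[X]) (hsupp2 : 2 ≤ q.support.card) {n : ℕ} (hn : 1 ≤ n) :
    2 ≤ (q ^ n).support.card := by
  have hq0 : q ≠ 0 := by
    intro h; rw [h] at hsupp2; simp at hsupp2
  have hmlt : q.natTrailingDegree < q.natDegree := by
    rw [natTrailingDegree_eq_support_min' hq0, natDegree_eq_support_max' hq0]
    exact Finset.min'_lt_max'_of_card _ hsupp2
  have hqn : q ^ n ≠ 0 := pow_ne_zero _ hq0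
  have hnd : (q ^ n).natDegree = n * q.natDegree :=
    natDegree_pow' (pow_ne_zero _ (leadingCoeff_ne_zero.mpr hq0))
  exact Finset.one_lt_card.mpr
    ⟨_, natTrailingDegree_mem_support_of_nonzero hqn, _,
      natDegree_mem_support_of_nonzero hqn, by
        rw [ntd_pow q hq0, hnd]
        exact Nat.ne_of_lt (mul_lt_mul_of_pos_left hmlt (by omega))⟩

lemma two_le_A0 [DecidableEq F] (p : ℕ) [Fact p.Prime] (α β γ δ : F)
    (htwo : 2 ≤ ([α, β, γ, δ].filter (· ≠ 0)).length)
    (f : Laurent2 F)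
    (hf : f = AddMonoidAlgebra.single 0 α + AddMonoidAlgebra.single ex β +
      AddMonoidAlgebra.single ey γ + AddMonoidAlgebra.single (ex + ey) δ) :
    2 ≤ (f ^ (p - 1)).coeff.support.card := by
  classical
  set q : F[X] := C α + C β * X + C γ * X ^ 2 + C δ * X ^ 3 with hq
  have h0 : q.coeff 0 = α := by simp [hq, coeff_one]
  have h1 : q.coeff 1 = β := by simp [hq]
  have h2 : q.coeff 2 = γ := by simp [hq, coeff_X]
  have h3 : q.coeff 3 = δ := by simp [hq, coeff_X]
  have key : ∀ i j : ℕ, i ≠ j → q.coeff i ≠ 0 → q.coeff j ≠ 0 → 2 ≤ q.support.card :=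
    fun i j hij hi hj => Finset.one_lt_card.mpr
      ⟨i, mem_support_iff.mpr hi, j, mem_support_iff.mpr hj, hij⟩
  have hsupp2 : 2 ≤ q.support.card := by
    by_cases hα : α = 0 <;> by_cases hβ : β = 0 <;> by_cases hγ : γ = 0 <;> by_cases hδ : δ = 0
    all_goals first
      | exact key 0 1 (by norm_num) (by rw [h0]; exact hα) (by rw [h1]; exact hβ)
      | exact key 0 2 (by norm_num) (by rw [h0]; exact hα) (by rw [h2]; exact hγ)
      | exact key 0 3 (by norm_num) (by rw [h0]; exact hα) (by rw [h3]; exact hδ)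
      | exact key 1 2 (by norm_num) (by rw [h1]; exact hβ) (by rw [h2]; exact hγ)
      | exact key 1 3 (by norm_num) (by rw [h1]; exact hβ) (by rw [h3]; exact hδ)
      | exact key 2 3 (by norm_num) (by rw [h2]; exact hγ) (by rw [h3]; exact hδ)
      | (exfalso; simp [hα, hβ, hγ, hδ] at htwo)
  have hn : 1 ≤ p - 1 := by
    have := (Fact.out : p.Prime).two_le; omega
  have hq2 : 2 ≤ (q ^ (p - 1)).support.card := two_le_card_pow q hsupp2 hn
  -- transfer through the ring hom
  set Φ : Laurent2 F →+* AddMonoidAlgebra F ℤ := AddMonoidAlgebra.mapDomainRingHom F Tlin with hΦ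
  have hTlin0 : Tlin (0 : Fin 2 →₀ ℤ) = 0 := by simp
  have hTlinx : Tlin ex = 1 := by simp [Tlin, ex, Finsupp.single_apply]
  have hTliny : Tlin ey = 2 := by simp [Tlin, ey, Finsupp.single_apply]
  have hTlinxy : Tlin (ex + ey) = 3 := by rw [map_add, hTlinx, hTliny]; norm_num
  have hΦsingle : ∀ (v : Fin 2 →₀ ℤ) (r : F),
      Φ (AddMonoidAlgebra.single v r) = AddMonoidAlgebra.single (Tlin v) r := by
    intro v r
    simp [hΦ, AddMonoidAlgebra.mapDomainRingHom_apply, Finsupp.mapDomain_single]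
  have hΦf : Φ f = Polynomial.toLaurent q := by
    rw [hf, map_add, map_add, map_add, hΦsingle, hΦsingle, hΦsingle, hΦsingle,
      hTlin0, hTlinx, hTliny, hTlinxy, hq]
    rw [map_add, map_add, map_add, Polynomial.toLaurent_C]
    rw [show C β * X = C β * X ^ 1 by ring, Polynomial.toLaurent_C_mul_X_pow,
      Polynomial.toLaurent_C_mul_X_pow, Polynomial.toLaurent_C_mul_X_pow]
    simp only [← LaurentPolynomial.single_eq_C_mul_T]
    norm_cast
  have hΦpow : Φ (f ^ (p - 1)) = Polynomial.toLaurent (q ^ (p - 1)) := by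
    rw [map_pow, hΦf, map_pow]
  -- card comparison
  have hle : (Φ (f ^ (p - 1))).coeff.support.card ≤ (f ^ (p - 1)).coeff.support.card := by
    have : (Φ (f ^ (p - 1))).coeff.support ⊆ (f ^ (p - 1)).coeff.support.image Tlin :=
      Finsupp.mapDomain_support
    calc (Φ (f ^ (p - 1))).coeff.support.card ≤ ((f ^ (p - 1)).coeff.support.image Tlin).card :=
          Finset.card_le_card this
      _ ≤ (f ^ (p - 1)).coeff.support.card := Finset.card_image_le
  have heq : (Polynomial.toLaurent (q ^ (p - 1))).coeff.support.card = (q ^ (p - 1)).support.card := by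
    rw [Polynomial.toLaurent_apply, AddMonoidAlgebra.coeff_mapDomain,
      Finsupp.mapDomain_support_of_injective (fun a b => by exact_mod_cast id)]
    exact Finset.card_image_of_injective _ (fun a b => by exact_mod_cast id)
  rw [hΦpow] at hle
  omega
end A0


/-- for `f = α + βx + γy + δxy` with at least two of `α,β,γ,δ` nonzero,
    and `A₀` the number of nonzero coefficients of `f^{p−1}`, the word
    `c_ℓ = f^{p^ℓ−1}` has exactly `A₀^ℓ` nonzero coefficients; moreover `A₀ ≥ 2`,
    so the weight grows without bound. -/
theorem stmt6 (F : Type) [Field F] [Fintype F] [DecidableEq F]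
    (p : ℕ) [Fact p.Prime] [CharP F p]
    (α β γ δ : F)
    (htwo : 2 ≤ ([α, β, γ, δ].filter (· ≠ 0)).length)
    (f : Laurent2 F)
    (hf : f = AddMonoidAlgebra.single 0 α + AddMonoidAlgebra.single ex β +
      AddMonoidAlgebra.single ey γ + AddMonoidAlgebra.single (ex + ey) δ)
    (A₀ : ℕ) (hA₀ : A₀ = (f ^ (p - 1)).coeff.support.card) (ℓ : ℕ) :
    (f ^ (p ^ ℓ - 1)).coeff.support.card = A₀ ^ ℓ ∧ 2 ≤ A₀ := by
  classical
  have hbox : InBox 1 f := by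
    intro v hv i
    rw [hf] at hv
    have h1 : v ∈ (AddMonoidAlgebra.single 0 α + AddMonoidAlgebra.single ex β +
        AddMonoidAlgebra.single ey γ : Laurent2 F).coeff.support ∪
        (AddMonoidAlgebra.single (ex + ey) δ : Laurent2 F).coeff.support :=
      Finsupp.support_add hv
    have h2 := Finsupp.support_add
      (ι := Fin 2 →₀ ℤ) (g₁ := (AddMonoidAlgebra.single 0 α + AddMonoidAlgebra.single ex β).coeff)
      (g₂ := (AddMonoidAlgebra.single ey γ).coeff)
    have h3 := Finsupp.support_add
      (ι := Fin 2 →₀ ℤ) (g₁ := (AddMonoidAlgebra.single (0 : Fin 2 →₀ ℤ) α).coeff)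
      (g₂ := (AddMonoidAlgebra.single ex β).coeff)
    have hv4 : v ∈ ({0, ex, ey, ex + ey} : Finset (Fin 2 →₀ ℤ)) := by
      rw [Finset.mem_union] at h1
      rcases h1 with h1 | h1
      · have := h2 h1
        rw [Finset.mem_union] at this
        rcases this with h | h
        · have := h3 h
          rw [Finset.mem_union] at this
          rcases this with h | h
          · have := Finsupp.support_single_subset h
            simp only [Finset.mem_singleton] at this
            simp [this]
          · have := Finsupp.support_single_subset h
            simp only [Finset.mem_singleton] at this
            simp [this]
        · have := Finsupp.support_single_subset h
          simp only [Finset.mem_singleton] at this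
          simp [this]
      · have := Finsupp.support_single_subset h1
        simp only [Finset.mem_singleton] at this
        simp [this]
    have hx : ex i = 0 ∨ ex i = 1 := by
      fin_cases i <;> simp [ex, Finsupp.single_apply]
    have hy : ey i = 0 ∨ ey i = 1 := by
      fin_cases i <;> simp [ey, Finsupp.single_apply]
    have hxy : ex i + ey i = 1 := by
      fin_cases i <;> simp [ex, ey, Finsupp.single_apply]
    simp only [Finset.mem_insert, Finset.mem_singleton] at hv4
    rcases hv4 with rfl | rfl | rfl | rfl
    · simp
    · omega
    · omega
    · rw [Finsupp.add_apply]; omega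
  constructor
  · induction ℓ with
    | zero =>
      rw [pow_zero, Nat.sub_self, pow_zero, pow_zero]
      rw [show (1 : Laurent2 F) = AddMonoidAlgebra.single 0 (1 : F) from rfl]
      rw [AddMonoidAlgebra.coeff_single, Finsupp.support_single_ne_zero _ one_ne_zero]
      simp
    | succ ℓ ih =>
      rw [card_step p f hbox ℓ, ih, hA₀, pow_succ]
      ring
  · rw [hA₀]
    exact two_le_A0 p α β γ δ htwo f hf
end

section
/- In the 2D translation-invariant classical code with m = 1 given by f = α + βx + γy + δxy over a field of characteristic p, there is a walk from 0 to c_ℓ = f^{p^ℓ−1} (flipping one coefficient at a time) whose maximum energy along the walk is at most 4·A₀·ℓ, where A₀ is the number of nonzero coefficients of f^{p−1}; i.e., the energy barrier to reach c_ℓ is O(log|c_ℓ|). -/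
namespace Stmt19Aux

open AddMonoidAlgebra

variable {F : Type} [Field F]

noncomputable instance (p : ℕ) [Fact p.Prime] [CharP F p] : CharP (Laurent2 F) p :=
  charP_of_injective_ringHom
    (f := (AddMonoidAlgebra.singleZeroRingHom : F →+* Laurent2 F))
    (fun _ _ h => Finsupp.single_injective 0 (congrArg AddMonoidAlgebra.coeff h)) p

lemma card_support_add_le (x y : Laurent2 F) :
    (x + y).coeff.support.card ≤ x.coeff.support.card + y.coeff.support.card := by
  rw [AddMonoidAlgebra.coeff_add]; exact (Finset.card_le_card Finsupp.support_add).trans (Finset.card_union_le _ _)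

lemma card_support_single_le (a : Fin 2 →₀ ℤ) (c : F) :
    (AddMonoidAlgebra.single a c : Laurent2 F).coeff.support.card ≤ 1 :=
  (Finset.card_le_card Finsupp.support_single_subset).trans (by simp)

lemma card_support_mul_le (x y : Laurent2 F) :
    (x * y).coeff.support.card ≤ x.coeff.support.card * y.coeff.support.card :=
  (Finset.card_le_card (AddMonoidAlgebra.support_coeff_mul_subset x y)).trans Finset.card_add_le

lemma card_support_single_mul_le (a : Fin 2 →₀ ℤ) (c : F) (y : Laurent2 F) :
    ((AddMonoidAlgebra.single a c : Laurent2 F) * y).coeff.support.card ≤ y.coeff.support.card := by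
  calc ((AddMonoidAlgebra.single a c : Laurent2 F) * y).coeff.support.card
      ≤ (AddMonoidAlgebra.single a c : Laurent2 F).coeff.support.card * y.coeff.support.card :=
        card_support_mul_le _ _
    _ ≤ 1 * y.coeff.support.card := by
        exact Nat.mul_le_mul_right _ (card_support_single_le a c)
    _ = y.coeff.support.card := one_mul _

lemma card_support_pow_char_le (p : ℕ) [Fact p.Prime] [CharP F p] (x : Laurent2 F) :
    (x ^ p).coeff.support.card ≤ x.coeff.support.card := by
  classical
  have hx : x = ∑ a ∈ x.coeff.support, AddMonoidAlgebra.single a (x.coeff a) := by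
    conv_lhs => rw [← AddMonoidAlgebra.sum_coeff_single x]
    rfl
  have hxp : x ^ p = ∑ a ∈ x.coeff.support, AddMonoidAlgebra.single (p • a) (x.coeff a ^ p) := by
    conv_lhs => rw [hx]
    rw [sum_pow_char]
    exact Finset.sum_congr rfl fun a _ => AddMonoidAlgebra.single_pow _ _ p
  rw [hxp, AddMonoidAlgebra.coeff_sum]
  refine le_trans (Finset.card_le_card Finsupp.support_finset_sum) ?_
  refine le_trans Finset.card_biUnion_le ?_
  calc ∑ a ∈ x.coeff.support, (AddMonoidAlgebra.single (p • a) (x.coeff a ^ p) : Laurent2 F).coeff.support.card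
      ≤ ∑ _a ∈ x.coeff.support, 1 := Finset.sum_le_sum fun a _ => card_support_single_le _ _
    _ = x.coeff.support.card := by simp

lemma card_support_pow_char_pow_le (p : ℕ) [Fact p.Prime] [CharP F p] (x : Laurent2 F)
    (k : ℕ) : (x ^ p ^ k).coeff.support.card ≤ x.coeff.support.card := by
  induction k with
  | zero => simp
  | succ k ih =>
      have : x ^ p ^ (k + 1) = (x ^ p ^ k) ^ p := by
        rw [← pow_mul, pow_succ]
      rw [this]
      exact (card_support_pow_char_le p _).trans ih

lemma sum_map_mul (m : Laurent2 F) (l : List (Laurent2 F)) :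
    (l.map (fun d => m * d)).sum = m * l.sum := by
  induction l with
  | nil => simp
  | cons x l ih => simp [ih, mul_add]

lemma list_sum_support_subset (l : List (Laurent2 F)) (S : Finset (Fin 2 →₀ ℤ))
    (h : ∀ x ∈ l, x.coeff.support ⊆ S) : l.sum.coeff.support ⊆ S := by
  induction l with
  | nil => simp
  | cons x l ih =>
      rw [List.sum_cons, AddMonoidAlgebra.coeff_add]
      refine Finsupp.support_add.trans (Finset.union_subset (h x (by simp)) ?_)
      exact ih fun y hy => h y (by simp [hy])

/-- Key list induction: prefix sums of the concatenated blocks have small energy. -/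
lemma step_bound (f hh : Laurent2 F) (D : List (Laurent2 F)) (B : ℕ) (hB : 4 ≤ B)
    (hD : ∀ n, (f * (D.take n).sum).coeff.support.card ≤ B)
    (hfc : (f * D.sum).coeff.support.card ≤ 4) :
    ∀ (L : List (Fin 2 →₀ ℤ)) (n : ℕ),
      (f * ((L.flatMap
        (fun a => D.map (fun d => AddMonoidAlgebra.single a (hh.coeff a) * d))).take n).sum
        ).coeff.support.card ≤ 4 * (L.length - 1) + B := by
  intro L
  induction L with
  | nil => intro n; simp
  | cons a L ih =>
    intro n
    rw [List.flatMap_cons, List.take_append, List.sum_append]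
    set m : Laurent2 F := AddMonoidAlgebra.single a (hh.coeff a) with hm
    have hlen : (D.map (fun d => m * d)).length = D.length := by simp
    rw [hlen]
    rw [mul_add]
    by_cases hn : n ≤ D.length
    · have h0 : n - D.length = 0 := by omega
      rw [h0]
      simp only [List.take_zero, List.sum_nil, mul_zero, add_zero]
      have htake : (D.map (fun d => m * d)).take n = (D.take n).map (fun d => m * d) := by
        rw [List.map_take]
      rw [htake, sum_map_mul, mul_left_comm]
      refine le_trans ?_ (Nat.le_add_left B _)
      exact (card_support_single_mul_le _ _ _).trans (hD n)
    · have htake : (D.map (fun d => m * d)).take n = D.map (fun d => m * d) := by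
        refine List.take_of_length_le ?_
        rw [hlen]; omega
      rw [htake, sum_map_mul, mul_left_comm]
      refine le_trans (card_support_add_le _ _) ?_
      have h1 : (m * (f * D.sum)).coeff.support.card ≤ 4 :=
        (card_support_single_mul_le _ _ _).trans hfc
      have h2 := ih (n - D.length)
      rcases L with _ | ⟨b, L⟩
      · simp only [List.flatMap_nil, List.take_nil, List.sum_nil, mul_zero] at h2 ⊢
        simp only [AddMonoidAlgebra.coeff_zero, Finsupp.support_zero, Finset.card_empty, add_zero, List.length_nil]
        omega
      · have hlen2 : (b :: L).length - 1 = L.length := by simp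
        rw [hlen2] at h2
        have : (a :: b :: L).length - 1 = L.length + 1 := by simp
        rw [this]
        omega

lemma main (p : ℕ) [Fact p.Prime] [CharP F p] (f : Laurent2 F)
    (hf4 : f.coeff.support.card ≤ 4) (A₀ : ℕ) (hA₀ : A₀ = (f ^ (p - 1)).coeff.support.card) :
    ∀ ℓ : ℕ, 1 ≤ ℓ → ∃ D : List (Laurent2 F),
      (∀ d ∈ D, d.coeff.support.card = 1) ∧
      D.sum = f ^ (p ^ ℓ - 1) ∧
      (∀ n, (f * (D.take n).sum).coeff.support.card ≤ 4 * (A₀ - 1) * ℓ + 4) := by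
  classical
  have hp2 : 2 ≤ p := (Fact.out : p.Prime).two_le
  intro ℓ
  induction ℓ with
  | zero => omega
  | succ ℓ ih =>
    intro _
    by_cases hℓ0 : ℓ = 0
    · -- base case ℓ + 1 = 1
      subst hℓ0
      set g : Laurent2 F := f ^ (p - 1) with hg
      refine ⟨g.coeff.support.toList.map (fun a => AddMonoidAlgebra.single a (g.coeff a)), ?_, ?_, ?_⟩
      · intro d hd
        rcases List.mem_map.1 hd with ⟨a, ha, rfl⟩
        rw [Finset.mem_toList, Finsupp.mem_support_iff] at ha
        rw [AddMonoidAlgebra.coeff_single, Finsupp.support_single_ne_zero _ ha, Finset.card_singleton]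
      · rw [Finset.sum_map_toList]
        have : p ^ 1 - 1 = p - 1 := by rw [pow_one]
        rw [this, ← hg]
        exact AddMonoidAlgebra.sum_coeff_single g
      · intro n
        have hsub : ((g.coeff.support.toList.map
            (fun a => AddMonoidAlgebra.single a (g.coeff a))).take n).sum.coeff.support ⊆ g.coeff.support := by
          refine list_sum_support_subset _ _ ?_
          intro x hx
          have hx' := List.take_subset n _ hx
          rcases List.mem_map.1 hx' with ⟨a, ha, rfl⟩
          rw [Finset.mem_toList] at ha
          exact Finsupp.support_single_subset.trans (by simpa using ha)
        have := card_support_mul_le f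
          ((g.coeff.support.toList.map (fun a => AddMonoidAlgebra.single a (g.coeff a))).take n).sum
        have hcard := (this.trans (Nat.mul_le_mul hf4 (Finset.card_le_card hsub)))
        omega
    · -- inductive step
      have hℓ1 : 1 ≤ ℓ := by omega
      obtain ⟨D, hD1, hDsum, hDpre⟩ := ih hℓ1
      have hq1 : 1 ≤ p ^ ℓ := Nat.one_le_pow _ _ (by omega)
      have hfc : (f * D.sum).coeff.support.card ≤ 4 := by
        rw [hDsum, ← pow_succ']
        have : p ^ ℓ - 1 + 1 = p ^ ℓ := by omega
        rw [this]
        exact (card_support_pow_char_pow_le p f ℓ).trans hf4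
      set h : Laurent2 F := (f ^ (p - 1)) ^ (p ^ ℓ) with hh
      have hhcard : h.coeff.support.card ≤ A₀ := by
        rw [hA₀]
        exact card_support_pow_char_pow_le p _ ℓ
      set B : ℕ := 4 * (A₀ - 1) * ℓ + 4 with hB
      have hB4 : 4 ≤ B := by omega
      refine ⟨h.coeff.support.toList.flatMap
        (fun a => D.map (fun d => AddMonoidAlgebra.single a (h.coeff a) * d)), ?_, ?_, ?_⟩
      · intro d hd
        rcases List.mem_flatMap.1 hd with ⟨a, ha, hd'⟩
        rcases List.mem_map.1 hd' with ⟨d0, hd0, rfl⟩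
        rw [Finset.mem_toList, Finsupp.mem_support_iff] at ha
        obtain ⟨b, hb, hd0eq⟩ := Finsupp.card_support_eq_one.1 (hD1 d0 hd0)
        replace hd0eq : d0 = AddMonoidAlgebra.single b (d0.coeff b) :=
          AddMonoidAlgebra.coeff_injective hd0eq
        rw [hd0eq, AddMonoidAlgebra.single_mul_single]
        rw [AddMonoidAlgebra.coeff_single, Finsupp.support_single_ne_zero _ (mul_ne_zero ha hb), Finset.card_singleton]
      · rw [List.flatMap, List.sum_flatten, List.map_map]
        have heq : (List.map (List.sum ∘ fun a =>
            D.map (fun d => AddMonoidAlgebra.single a (h.coeff a) * d)) h.coeff.support.toList)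
            = List.map (fun a => AddMonoidAlgebra.single a (h.coeff a) * D.sum) h.coeff.support.toList := by
          refine List.map_congr_left ?_
          intro a _
          exact sum_map_mul _ D
        rw [heq]
        have : (List.map (fun a => AddMonoidAlgebra.single a (h.coeff a) * D.sum) h.coeff.support.toList).sum
            = (List.map (fun a => AddMonoidAlgebra.single a (h.coeff a)) h.coeff.support.toList).sum * D.sum := by
          induction h.coeff.support.toList with
          | nil => simp
          | cons x l ihl => simp [ihl, add_mul]
        have hsum : ∑ a ∈ h.coeff.support, AddMonoidAlgebra.single a (h.coeff a) = h := by
          conv_rhs => rw [← AddMonoidAlgebra.sum_coeff_single h]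
          rfl
        rw [this, Finset.sum_map_toList, hsum, hDsum, hh, ← pow_mul, ← pow_add]
        congr 1
        have hps : p ^ (ℓ + 1) = p ^ ℓ * p := pow_succ p ℓ
        have hmul : (p - 1) * p ^ ℓ = p * p ^ ℓ - 1 * p ^ ℓ := Nat.sub_mul p 1 (p ^ ℓ)
        have hle : p ^ ℓ ≤ p * p ^ ℓ := Nat.le_mul_of_pos_left _ (by omega)
        have : p ^ ℓ * p = p * p ^ ℓ := Nat.mul_comm _ _
        omega
      · intro n
        have := step_bound f h D B hB4 hDpre hfc h.coeff.support.toList n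
        refine this.trans ?_
        have hlen : h.coeff.support.toList.length = h.coeff.support.card := Finset.length_toList _
        rw [hlen, hB]
        have hstep : 4 * (h.coeff.support.card - 1) ≤ 4 * (A₀ - 1) := by omega
        calc 4 * (h.coeff.support.card - 1) + (4 * (A₀ - 1) * ℓ + 4)
            ≤ 4 * (A₀ - 1) + (4 * (A₀ - 1) * ℓ + 4) := by omega
          _ = 4 * (A₀ - 1) * (ℓ + 1) + 4 := by ring
end Stmt19Aux

open Stmt19Aux

/-- in the `m = 1` 2D translation-invariant classical code given by
    `f = α + βx + γy + δxy` over a field of characteristic `p`, there is a walk from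
    `0` to `c_ℓ = f^{p^ℓ−1}` flipping one coefficient at a time whose maximum energy
    (number of nonzero coefficients of `f·v`) is at most `4·A₀·ℓ`, where `A₀` is the
    number of nonzero coefficients of `f^{p−1}`. -/
theorem stmt19 (F : Type) [Field F] [Fintype F] (p : ℕ) [Fact p.Prime] [CharP F p]
    (α β γ δ : F)
    (f : Laurent2 F)
    (hf : f = AddMonoidAlgebra.single 0 α + AddMonoidAlgebra.single ex β +
      AddMonoidAlgebra.single ey γ + AddMonoidAlgebra.single (ex + ey) δ)
    (A₀ : ℕ) (hA₀ : A₀ = (f ^ (p - 1)).coeff.support.card)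
    (ℓ : ℕ) (hℓ : 1 ≤ ℓ) :
    ∃ walk : List (Laurent2 F),
      walk.head? = some 0 ∧
      walk.getLast? = some (f ^ (p ^ ℓ - 1)) ∧
      (∀ i : ℕ, (h : i + 1 < walk.length) →
        ((walk.get ⟨i, by omega⟩) - walk.get ⟨i + 1, h⟩).coeff.support.card = 1) ∧
      (∀ v ∈ walk, (f * v).coeff.support.card ≤ 4 * A₀ * ℓ) := by
  classical
  have hp2 : 2 ≤ p := (Fact.out : p.Prime).two_le
  have hf4 : f.coeff.support.card ≤ 4 := by
    rw [hf]
    refine le_trans (card_support_add_le _ _) ?_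
    refine le_trans (Nat.add_le_add
      (le_trans (card_support_add_le _ _) (Nat.add_le_add
        (le_trans (card_support_add_le _ _) (Nat.add_le_add
          (card_support_single_le _ _) (card_support_single_le _ _)))
        (card_support_single_le _ _)))
      (card_support_single_le _ _)) ?_
    norm_num
  by_cases hA0 : A₀ = 0
  · -- f^(p-1) = 0, so c_ℓ = 0 and the trivial walk works
    have hg0 : f ^ (p - 1) = 0 := by
      have : (f ^ (p - 1)).coeff.support = ∅ := Finset.card_eq_zero.mp (by omega)
      exact AddMonoidAlgebra.coeff_eq_zero.mp (Finsupp.support_eq_empty.mp this)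
    have hple : p ≤ p ^ ℓ := Nat.le_self_pow (by omega) p
    have hc0 : f ^ (p ^ ℓ - 1) = 0 := by
      have he : p ^ ℓ - 1 = (p - 1) + (p ^ ℓ - p) := by omega
      rw [he, pow_add, hg0, zero_mul]
    refine ⟨[0], rfl, by simp [hc0], ?_, ?_⟩
    · intro i hi
      simp only [List.length_singleton] at hi
      omega
    · intro v hv
      simp only [List.mem_singleton] at hv
      subst hv
      simp
  · -- main case
    obtain ⟨D, hD1, hDsum, hDpre⟩ := Stmt19Aux.main p f hf4 A₀ hA₀ ℓ hℓ
    refine ⟨(List.range (D.length + 1)).map (fun n => (D.take n).sum), ?_, ?_, ?_, ?_⟩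
    · rw [List.range_succ_eq_map]
      simp
    · rw [List.range_succ, List.map_append]
      simp only [List.map_cons, List.map_nil, List.getLast?_concat]
      rw [List.take_length, hDsum]
    · intro i hi
      simp only [List.length_map, List.length_range] at hi
      have hiD : i < D.length := by omega
      have hget : ∀ (j : ℕ) (hj : j < D.length + 1),
          ((List.range (D.length + 1)).map (fun n => (D.take n).sum)).get
            ⟨j, by simp; omega⟩ = (D.take j).sum := by
        intro j hj
        simp
      rw [hget i (by omega), hget (i + 1) (by omega)]
      have htake : D.take (i + 1) = D.take i ++ [D[i]] := by
        rw [List.take_succ, List.getElem?_eq_getElem hiD]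
        rfl
      rw [htake, List.sum_append, List.sum_cons, List.sum_nil, add_zero]
      have : (D.take i).sum - ((D.take i).sum + D[i]) = -D[i] := by ring
      rw [this]
      rw [AddMonoidAlgebra.coeff_neg, Finsupp.support_neg]
      exact hD1 _ (List.getElem_mem hiD)
    · intro v hv
      rcases List.mem_map.1 hv with ⟨n, _, rfl⟩
      refine (hDpre n).trans ?_
      have h1 : A₀ - 1 + 1 = A₀ := by omega
      calc 4 * (A₀ - 1) * ℓ + 4 ≤ 4 * (A₀ - 1) * ℓ + 4 * ℓ := by omega
        _ = 4 * ((A₀ - 1) + 1) * ℓ := by ring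
        _ = 4 * A₀ * ℓ := by rw [h1]
end
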